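/- Let A be an abelian category and let f : A ⟶ B, g : A ⟶ C, h : B ⟶ D, k : C ⟶ D form a commutative quadrangle (f ≫ h = g ≫ k). If f is an epimorphism and k is a monomorphism, then the quadrangle is a weak square. -/
import Mathlib


open CategoryTheory CategoryTheory.Limits

/-- A commutative quadrangle `(f, g, h, k)` (with `f ≫ h = g ≫ k`) in an abelian category is a
*weak square* if its diagonal sequence `A ⟶ B ⊞ C ⟶ D`, with first morphism `biprod.lift f g`
and second morphism `biprod.desc h (-k)`, is exact at `B ⊞ C`. -/
def IsWeakSquare {A : Type*} [Category A] [Abelian A] {W X Y Z : A}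
    (f : W ⟶ X) (g : W ⟶ Y) (h : X ⟶ Z) (k : Y ⟶ Z) : Prop :=
  ∃ w : biprod.lift f g ≫ biprod.desc h (-k) = 0,
    (ShortComplex.mk (biprod.lift f g) (biprod.desc h (-k)) w).Exact

/-- A commutative quadrangle whose first morphism `f` is an epimorphism and whose fourth
morphism `k` is a monomorphism is a weak square. -/
theorem isWeakSquare_of_epi_of_mono {A : Type*} [Category A] [Abelian A]
    {W X Y Z : A} (f : W ⟶ X) (g : W ⟶ Y) (h : X ⟶ Z) (k : Y ⟶ Z)
    (comm : f ≫ h = g ≫ k) (hf : Epi f) (hk : Mono k) :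
    IsWeakSquare f g h k := by
  have w : biprod.lift f g ≫ biprod.desc h (-k) = 0 := by
    rw [biprod.lift_desc]
    simp [comm]
  refine ⟨w, ?_⟩
  rw [ShortComplex.exact_iff_exact_up_to_refinements]
  intro T x hx
  dsimp at x hx
  have hx' : x ≫ biprod.fst ≫ h = x ≫ biprod.snd ≫ k := by
    have := hx
    simp only [biprod.desc_eq] at this
    have h1 := congrArg (fun t => t) this
    -- expand: x ≫ desc h (-k) = x ≫ fst ≫ h + x ≫ snd ≫ (-k)
    have : x ≫ (biprod.fst ≫ h + biprod.snd ≫ (-k)) = 0 := by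
      rw [← biprod.desc_eq] at *
      simpa using hx
    simp only [Preadditive.comp_add, Preadditive.comp_neg, Category.assoc] at this
    rw [add_neg_eq_zero] at this
    simpa using this
  refine ⟨pullback (x ≫ biprod.fst) f, pullback.fst _ _, inferInstance,
    pullback.snd _ _, ?_⟩
  have hcond : pullback.snd (x ≫ biprod.fst) f ≫ f =
      pullback.fst (x ≫ biprod.fst) f ≫ (x ≫ biprod.fst) :=
    (pullback.condition).symm
  dsimp
  ext
  · simpa [Category.assoc] using (pullback.condition (f := x ≫ biprod.fst) (g := f))
  · rw [← cancel_mono k]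
    have h1 : pullback.snd (x ≫ biprod.fst) f ≫ g ≫ k =
        pullback.fst (x ≫ biprod.fst) f ≫ x ≫ biprod.snd ≫ k := by
      rw [← comm, ← Category.assoc, hcond]
      simp only [Category.assoc, hx']
    simpa [Category.assoc] using h1.symm
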